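/- The function s(x, ρ) = x ρ^4 + ρ^2 x^{2r+1} + Σ_{i=r+1}^{N} a_i ρ^2 x^{2i+1} is a first integral of the planar system dx/dt = 2xρ^2 + x^{2r+1} + Σ_{i=r+1}^{N} a_i x^{2i+1}, dρ/dt = -(1/2)ρ^3 - ((2r+1)/2) x^{2r} ρ - Σ_{i=r+1}^{N} ((2i+1)/2) a_i x^{2i} ρ; that is, (∂s/∂x)(dx/dt) + (∂s/∂ρ)(dρ/dt) = 0 identically. -/

import Mathlib

noncomputable def pX (f : ℝ → ℝ → ℝ) (x ρ : ℝ) : ℝ := deriv (fun t => f t ρ) x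
noncomputable def pR (f : ℝ → ℝ → ℝ) (x ρ : ℝ) : ℝ := deriv (fun t => f x t) ρ

/-- `s(x,ρ) = xρ⁴ + ρ² x^{2r+1} + Σ_{i=r+1}^N aᵢ ρ² x^{2i+1}` is a first integral of the
planar system `dx/dt = 2xρ² + x^{2r+1} + Σ aᵢ x^{2i+1}`,
`dρ/dt = -(1/2)ρ³ - ((2r+1)/2) x^{2r} ρ - Σ ((2i+1)/2) aᵢ x^{2i} ρ`. -/
theorem firstIntegral_uniqueNF (r N : ℕ) (hr : 0 < r) (hN : r + 1 ≤ N) (a : ℕ → ℝ) :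
    ∀ x ρ : ℝ,
      pX (fun x ρ => x * ρ ^ 4 + ρ ^ 2 * x ^ (2 * r + 1) +
          ∑ i ∈ Finset.Icc (r + 1) N, a i * ρ ^ 2 * x ^ (2 * i + 1)) x ρ *
        (2 * x * ρ ^ 2 + x ^ (2 * r + 1) +
          ∑ i ∈ Finset.Icc (r + 1) N, a i * x ^ (2 * i + 1)) +
      pR (fun x ρ => x * ρ ^ 4 + ρ ^ 2 * x ^ (2 * r + 1) +
          ∑ i ∈ Finset.Icc (r + 1) N, a i * ρ ^ 2 * x ^ (2 * i + 1)) x ρ *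
        (-(1 / 2) * ρ ^ 3 - ((2 * (r : ℝ) + 1) / 2) * x ^ (2 * r) * ρ -
          ∑ i ∈ Finset.Icc (r + 1) N, ((2 * (i : ℝ) + 1) / 2) * a i * x ^ (2 * i) * ρ) = 0 := by
  intro x ρ
  -- abbreviations for the two sums
  set S : ℝ := ∑ i ∈ Finset.Icc (r + 1) N, a i * x ^ (2 * i + 1) with hS
  set T : ℝ := ∑ i ∈ Finset.Icc (r + 1) N, (2 * (i : ℝ) + 1) * a i * x ^ (2 * i) with hT
  -- derivative in x
  have hx : HasDerivAt (fun t : ℝ => t * ρ ^ 4 + ρ ^ 2 * t ^ (2 * r + 1) +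
      ∑ i ∈ Finset.Icc (r + 1) N, a i * ρ ^ 2 * t ^ (2 * i + 1))
      (ρ ^ 4 + ρ ^ 2 * ((2 * (r : ℝ) + 1) * x ^ (2 * r)) + ρ ^ 2 * T) x := by
    have h1 : HasDerivAt (fun t : ℝ => t * ρ ^ 4) (ρ ^ 4) x := by
      simpa using (hasDerivAt_id x).mul_const (ρ ^ 4)
    have h2 : HasDerivAt (fun t : ℝ => ρ ^ 2 * t ^ (2 * r + 1))
        (ρ ^ 2 * ((2 * (r : ℝ) + 1) * x ^ (2 * r))) x := by
      have := (hasDerivAt_pow (2 * r + 1) x).const_mul (ρ ^ 2)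
      refine this.congr_deriv ?_
      have e : 2 * r + 1 - 1 = 2 * r := by omega
      rw [e]; push_cast; ring
    have h3 : HasDerivAt (fun t : ℝ => ∑ i ∈ Finset.Icc (r + 1) N, a i * ρ ^ 2 * t ^ (2 * i + 1))
        (ρ ^ 2 * T) x := by
      have := HasDerivAt.fun_sum (u := Finset.Icc (r + 1) N)
        (A := fun i (t : ℝ) => a i * ρ ^ 2 * t ^ (2 * i + 1))
        (A' := fun i => a i * ρ ^ 2 * (((2 * i + 1) : ℕ) * x ^ (2 * i + 1 - 1)))
        (fun i _ => (hasDerivAt_pow (2 * i + 1) x).const_mul (a i * ρ ^ 2))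
      refine this.congr_deriv ?_
      rw [hT, Finset.mul_sum]
      refine Finset.sum_congr rfl fun i _ => ?_
      simp only [Nat.add_sub_cancel]
      push_cast
      ring
    exact (h1.add h2).add h3
  -- derivative in ρ
  have hρ : HasDerivAt (fun t : ℝ => x * t ^ 4 + t ^ 2 * x ^ (2 * r + 1) +
      ∑ i ∈ Finset.Icc (r + 1) N, a i * t ^ 2 * x ^ (2 * i + 1))
      (x * (4 * ρ ^ 3) + 2 * ρ * x ^ (2 * r + 1) + 2 * ρ * S) ρ := by
    have h1 : HasDerivAt (fun t : ℝ => x * t ^ 4) (x * (4 * ρ ^ 3)) ρ := by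
      have := (hasDerivAt_pow 4 ρ).const_mul x
      refine this.congr_deriv ?_ <;> push_cast <;> ring
    have h2 : HasDerivAt (fun t : ℝ => t ^ 2 * x ^ (2 * r + 1))
        (2 * ρ * x ^ (2 * r + 1)) ρ := by
      have := (hasDerivAt_pow 2 ρ).mul_const (x ^ (2 * r + 1))
      refine this.congr_deriv ?_ <;> push_cast <;> ring
    have h3 : HasDerivAt (fun t : ℝ => ∑ i ∈ Finset.Icc (r + 1) N, a i * t ^ 2 * x ^ (2 * i + 1))
        (2 * ρ * S) ρ := by
      have := HasDerivAt.fun_sum (u := Finset.Icc (r + 1) N)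
        (A := fun i (t : ℝ) => a i * t ^ 2 * x ^ (2 * i + 1))
        (A' := fun i => a i * (2 * ρ) * x ^ (2 * i + 1))
        (fun i _ => by
          have := ((hasDerivAt_pow 2 ρ).const_mul (a i)).mul_const (x ^ (2 * i + 1))
          (refine this.congr_deriv ?_ <;> push_cast <;> ring))
      refine this.congr_deriv ?_
      rw [hS, Finset.mul_sum]
      exact Finset.sum_congr rfl fun i _ => by ring
    exact (h1.add h2).add h3
  have hlast : ∑ i ∈ Finset.Icc (r + 1) N, ((2 * (i : ℝ) + 1) / 2) * a i * x ^ (2 * i) * ρ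
      = (ρ / 2) * T := by
    rw [hT, Finset.mul_sum]
    exact Finset.sum_congr rfl fun i _ => by ring
  rw [pX, pR, hx.deriv, hρ.deriv, hlast]
  ring
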